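/- Let k ≥ 1 and let V be the (k+1)×(k+1) real Vandermonde matrix with entries V_{i,j} = ((i−1)/k)^{j−1} for 1 ≤ i, j ≤ k+1. Then for every vector a ∈ ℝ^{k+1}, ‖V a‖₂ ≥ 2^{−2k²} · ‖a‖₂; that is, the smallest singular value of V is at least 2^{−2k²}. -/

import Mathlib

open scoped BigOperators

namespace GraphDisc

/-- A `k`-distinguisher is symmetric: invariant under all permutations of arguments. -/
def IsSymmetric {V : Type*} {k : ℕ} (g : (Fin k → V) → Bool) : Prop :=
  ∀ (σ : Equiv.Perm (Fin k)) (w : Fin k → V), g (w ∘ σ) = g w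

/-- A `k`-distinguishing class: a family of symmetric Boolean `k`-ary functions. -/
def IsDistinguishingClass {V : Type*} {k : ℕ} (G : Set ((Fin k → V) → Bool)) : Prop :=
  ∀ g ∈ G, IsSymmetric g

/-- `p` is a probability distribution on `V` (as a mass function). -/
def IsDist {V : Type*} (p : V → ℝ) : Prop := (∀ v, 0 ≤ p v) ∧ HasSum p 1

/-- `L_P(g)`: expected value of `g` on a `k`-tuple of i.i.d. samples from `p`. -/
noncomputable def LP {V : Type*} {k : ℕ} (p : V → ℝ) (g : (Fin k → V) → Bool) : ℝ :=
  ∑' w : Fin k → V, (∏ i, p (w i)) * (if g w then 1 else 0)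

/-- `L_S(g)`: empirical frequency of `g` on all `k`-tuples from the sample `S`. -/
noncomputable def LS {V : Type*} {k m : ℕ} (S : Fin m → V) (g : (Fin k → V) → Bool) : ℝ :=
  (∑ t : Fin k → Fin m, if g (S ∘ t) then (1 : ℝ) else 0) / (m : ℝ) ^ k

/-- Probability of an event `E` under an i.i.d. sample of size `m` from `p`. -/
noncomputable def Prob {V : Type*} (p : V → ℝ) {m : ℕ} (E : Set (Fin m → V)) : ℝ :=
  ∑' S : Fin m → V, E.indicator (fun S => ∏ i, p (S i)) S

/-- Probability of an event `E` under two independent i.i.d. samples of size `m`. -/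
noncomputable def Prob2 {V : Type*} (p₁ p₂ : V → ℝ) {m : ℕ}
    (E : Set ((Fin m → V) × (Fin m → V))) : ℝ :=
  ∑' S : (Fin m → V) × (Fin m → V),
    E.indicator (fun S => (∏ i, p₁ (S.1 i)) * ∏ i, p₂ (S.2 i)) S

/-- IPM distance induced by a class of `k`-ary distinguishers. -/
noncomputable def IPM {V : Type*} {k : ℕ} (G : Set ((Fin k → V) → Bool))
    (p₁ p₂ : V → ℝ) : ℝ :=
  ⨆ g ∈ G, |LP p₁ g - LP p₂ g|

/-- `L_P(d)` for a unary Boolean function `d`. -/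
noncomputable def LP1 {V : Type*} (p : V → ℝ) (d : V → Bool) : ℝ :=
  ∑' v : V, p v * (if d v then 1 else 0)

/-- IPM distance for a family of unary Boolean functions. -/
noncomputable def IPM1 {V : Type*} (D : Set (V → Bool)) (p₁ p₂ : V → ℝ) : ℝ :=
  ⨆ d ∈ D, |LP1 p₁ d - LP1 p₂ d|

/-- `L_P(g)` for a binary (curried) Boolean function `g`. -/
noncomputable def LP2 {V : Type*} (p : V → ℝ) (g : V → V → Bool) : ℝ :=
  ∑' w : V × V, (p w.1 * p w.2) * (if g w.1 w.2 then 1 else 0)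

/-- `D` shatters the finite set `T`: every Boolean pattern on `T` is realized in `D`. -/
def Shatters {X : Type*} (D : Set (X → Bool)) (T : Finset X) : Prop :=
  ∀ f : X → Bool, ∃ d ∈ D, ∀ x ∈ T, d x = f x

/-- The VC dimension of a family of Boolean functions. -/
noncomputable def vcDim {X : Type*} (D : Set (X → Bool)) : ℕ∞ :=
  ⨆ T ∈ {T : Finset X | Shatters D T}, (T.card : ℕ∞)

/-- Fixing the first argument of a `(k+1)`-ary function to `v`. -/
def proj {V : Type*} {k : ℕ} (v : V) (g : (Fin (k + 1) → V) → Bool) :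
    (Fin k → V) → Bool := fun u => g (Fin.cons v u)

/-- The graph VC dimension, defined inductively: for `k = 1` it is the usual VC
dimension; for `k > 1` it is the supremum over `v` of the graph VC dimension of the
projected class `G_v`. -/
noncomputable def gvcDim {V : Type*} : (k : ℕ) → Set ((Fin k → V) → Bool) → ℕ∞
  | 0, G => vcDim G
  | 1, G => vcDim G
  | (k + 2), G => ⨆ v : V, gvcDim (k + 1) (proj v '' G)

open Classical in
/-- Mixture `q·δ_v + (1−q)·p`. -/
noncomputable def mix {V : Type*} (q : ℝ) (v : V) (p : V → ℝ) : V → ℝ :=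
  fun u => q * (if u = v then 1 else 0) + (1 - q) * p u

/-- The class of majority-vote threshold functions over `m`-tuples from `D`. -/
noncomputable def thresholdClass {V : Type*} (D : Set (V → Bool)) (m : ℕ) :
    Set (V → Bool) :=
  {h | ∃ d : Fin m → (V → Bool), (∀ i, d i ∈ D) ∧
        h = fun v => decide ((0 : ℝ) ≤ ∑ i, (2 * (if d i v then (1 : ℝ) else 0) - 1))}


open Finset in
lemma lemE (k : ℕ) : ((k:ℝ)+1)^k ≤ 3 * (k:ℝ)^k := by
  rcases Nat.eq_zero_or_pos k with h | h
  · subst h; norm_num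
  have hk : (0:ℝ) < k := by exact_mod_cast h
  have h1 : (k:ℝ) + 1 ≤ k * Real.exp (1/k) := by
    have := Real.add_one_le_exp (1/(k:ℝ))
    calc (k:ℝ) + 1 = k * (1/k + 1) := by field_simp; ring
    _ ≤ k * Real.exp (1/k) := by nlinarith [Real.add_one_le_exp (1/(k:ℝ))]
  calc ((k:ℝ)+1)^k ≤ (k * Real.exp (1/k))^k := by
        apply pow_le_pow_left₀ (by positivity) h1
    _ = (k:ℝ)^k * Real.exp (1/k) ^ k := mul_pow _ _ _
    _ = (k:ℝ)^k * Real.exp (k * (1/k)) := by rw [← Real.exp_nat_mul]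
    _ ≤ 3 * (k:ℝ)^k := by
        rw [mul_one_div, div_self (ne_of_gt hk)]
        have h3 : Real.exp 1 ≤ 3 := by
          have := Real.exp_one_lt_d9; linarith
        nlinarith [pow_pos hk k]

open Finset in
lemma lemL1 (k : ℕ) : (k:ℝ)^k ≤ 3^k * (Nat.factorial k : ℝ) := by
  induction k with
  | zero => norm_num
  | succ k ih =>
    have hE := lemE k
    have hk0 : (0:ℝ) ≤ (k:ℝ)+1 := by positivity
    calc ((k+1:ℕ):ℝ)^(k+1) = ((k:ℝ)+1) * ((k:ℝ)+1)^k := by push_cast; ring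
      _ ≤ ((k:ℝ)+1) * (3 * (k:ℝ)^k) := by nlinarith
      _ ≤ ((k:ℝ)+1) * (3 * (3^k * (Nat.factorial k : ℝ))) := by
          have : (3:ℝ) * (k:ℝ)^k ≤ 3 * (3^k * (Nat.factorial k : ℝ)) := by nlinarith
          nlinarith
      _ = 3^(k+1) * ((Nat.factorial (k+1) : ℝ)) := by
          rw [Nat.factorial_succ]; push_cast; ring

open Finset in
lemma lemL3 (k : ℕ) (hk : 2 ≤ k) :
    27 * 27^k * ((k:ℝ)+2)^4 ≤ 16 * ((k:ℝ)+1)^2 * 256^k := by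
  induction k with
  | zero => omega
  | succ k ih =>
    rcases Nat.lt_or_ge k 2 with h | h
    · interval_cases k
      · omega
      · norm_num
    · have ih' := ih h
      have hk0 : (0:ℝ) ≤ k := Nat.cast_nonneg k
      have poly : 27 * ((k:ℝ)+3)^4 * ((k:ℝ)+1)^2 ≤ 256 * ((k:ℝ)+2)^6 := by
        nlinarith [pow_nonneg hk0 2, pow_nonneg hk0 3, pow_nonneg hk0 4,
          pow_nonneg hk0 5, pow_nonneg hk0 6, hk0]
      have h2pos : (0:ℝ) < ((k:ℝ)+2)^4 := by positivity
      have key : 27 * 27^(k+1) * (((k:ℝ)+1)+2)^4 * ((k:ℝ)+2)^4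
          ≤ 16 * (((k:ℝ)+1)+1)^2 * 256^(k+1) * ((k:ℝ)+2)^4 := by
        calc 27 * 27^(k+1) * (((k:ℝ)+1)+2)^4 * ((k:ℝ)+2)^4
            = 27 * ((k:ℝ)+3)^4 * (27 * 27^k * ((k:ℝ)+2)^4) := by ring
          _ ≤ 27 * ((k:ℝ)+3)^4 * (16 * ((k:ℝ)+1)^2 * 256^k) :=
              mul_le_mul_of_nonneg_left ih' (by positivity)
          _ = 16 * 256^k * (27 * ((k:ℝ)+3)^4 * ((k:ℝ)+1)^2) := by ring
          _ ≤ 16 * 256^k * (256 * ((k:ℝ)+2)^6) :=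
              mul_le_mul_of_nonneg_left poly (by positivity)
          _ = 16 * (((k:ℝ)+1)+1)^2 * 256^(k+1) * ((k:ℝ)+2)^4 := by ring
      push_cast
      exact le_of_mul_le_mul_right key h2pos

open Finset in
lemma lemM (k : ℕ) (hk : 1 ≤ k) :
    (k:ℝ)^(k*(k+1)) * ((k:ℝ)+1)^4
      ≤ (∏ j ∈ range k, (j.factorial:ℝ))^2 * 16^(k^2) := by
  induction k, hk using Nat.le_induction with
  | base => norm_num
  | succ k hk ih =>
    rcases Nat.lt_or_ge k 2 with h2 | h2
    · interval_cases k
      norm_num [Finset.prod_range_succ]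
    · have hk0 : (0:ℝ) ≤ (k:ℝ) := Nat.cast_nonneg k
      rw [Finset.prod_range_succ]
      push_cast
      have hadd : (k:ℝ) + 1 + 1 = (k:ℝ) + 2 := by ring
      rw [hadd]
      set P : ℝ := (k:ℝ)^k with hP
      set Q : ℝ := (k:ℝ)+1 with hQ
      set K2 : ℝ := (k:ℝ)+2 with hK2
      set F : ℝ := (k.factorial : ℝ) with hF
      set Sk : ℝ := ∏ j ∈ range k, (j.factorial:ℝ) with hSk
      have hQ0 : (0:ℝ) ≤ Q := by positivity
      have hP0 : (0:ℝ) ≤ P := by positivity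
      have hF0 : (0:ℝ) ≤ F := by positivity
      have hE : Q^k ≤ 3*P := by simpa [hQ, hP] using lemE k
      have hL1 : P ≤ 3^k * F := by simpa [hP, hF] using lemL1 k
      have hL3 : 27*27^k*K2^4 ≤ 16*Q^2*256^k := by
        have := lemL3 k h2
        simpa [hQ, hK2, mul_comm, mul_assoc, mul_left_comm] using this
      have e1 : Q^((k+1)*(k+1+1)) = (Q^k)^(k+1) * (Q^k)^2 * Q^2 := by
        rw [← pow_mul, ← pow_mul, ← pow_add, ← pow_add]
        congr 1
        ring
      have h27 : (27:ℝ)^k = 3^k*(3^k*3^k) := by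
        rw [show (27:ℝ) = 3*(3*3) by norm_num, mul_pow, mul_pow]
      have h16 : (16:ℝ)^(2*k+1) = 16^k*16^k*16 := by
        rw [pow_add, two_mul, pow_add, pow_one]
      have h256 : (256:ℝ)^k = 16^k*16^k := by
        rw [show (256:ℝ) = 16*16 by norm_num, mul_pow]
      have hPk : P^(k+1) = (k:ℝ)^(k*(k+1)) := by rw [hP, ← pow_mul]
      have hexp : (16:ℝ)^(k^2) * 16^(2*k+1) = 16^((k+1)^2) := by
        rw [← pow_add]
        congr 1
        ring
      calc Q^((k+1)*(k+1+1)) * K2^4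
          = (Q^k)^(k+1) * (Q^k)^2 * Q^2 * K2^4 := by rw [e1]
        _ ≤ (3*P)^(k+1) * (3*P)^2 * Q^2 * K2^4 := by gcongr
        _ = 3^(k+1) * P^(k+1) * (9*(P^2)) * Q^2 * K2^4 := by rw [mul_pow]; ring
        _ ≤ 3^(k+1) * P^(k+1) * (9*((3^k*F)^2)) * Q^2 * K2^4 := by gcongr
        _ = P^(k+1) * F^2 * Q^2 * (27*27^k*K2^4) := by rw [h27]; ring
        _ ≤ P^(k+1) * F^2 * Q^2 * (16*Q^2*256^k) := by gcongr
        _ = ((k:ℝ)^(k*(k+1)) * Q^4) * (F^2 * 16^(2*k+1)) := by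
            rw [← hPk, h256, h16]; ring
        _ ≤ (Sk^2 * 16^(k^2)) * (F^2 * 16^(2*k+1)) :=
            mul_le_mul_of_nonneg_right ih (by positivity)
        _ = (Sk*F)^2 * 16^((k+1)^2) := by rw [← hexp]; ring

open Finset in
lemma key (k : ℕ) (hk : 1 ≤ k) :
    ((k:ℝ)+1) * ((k+1).factorial : ℝ)
      ≤ 2^(2*k^2) * ∏ m ∈ Finset.range (k+1), ((m.factorial : ℝ) / (k:ℝ)^m) := by
  have hkpos : (0:ℝ) < k := by exact_mod_cast hk
  set G : ℕ := ∑ i ∈ range (k+1), i with hG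
  have hGauss : G * 2 = (k+1) * k := by
    rw [hG]; exact Finset.sum_range_id_mul_two (k+1)
  have hprod : ∏ m ∈ Finset.range (k+1), ((m.factorial : ℝ) / (k:ℝ)^m)
      = (∏ m ∈ range (k+1), (m.factorial : ℝ)) / (k:ℝ)^G := by
    rw [Finset.prod_div_distrib, Finset.prod_pow_eq_pow_sum]
  rw [hprod, ← mul_div_assoc, le_div_iff₀ (by positivity)]
  have e1 : (((k:ℝ)^G)^2) = (k:ℝ)^(k*(k+1)) := by
    rw [← pow_mul, mul_comm k (k+1), ← hGauss, mul_comm G 2, two_mul, ← mul_two]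
  have e2 : (((2:ℝ)^(2*k^2))^2) = 16^(k^2) := by
    rw [← pow_mul, show 2*k^2*2 = 4*k^2 by ring, pow_mul]
    norm_num
  have e3 : ∏ m ∈ range (k+1), (m.factorial : ℝ)
      = (∏ j ∈ range k, (j.factorial:ℝ)) * (k.factorial:ℝ) := by
    rw [Finset.prod_range_succ]
  have e4 : (((k+1).factorial : ℝ)) = ((k:ℝ)+1) * (k.factorial:ℝ) := by
    rw [Nat.factorial_succ]; push_cast; ring
  have hsq : ((((k:ℝ)+1) * ((k+1).factorial : ℝ)) * (k:ℝ)^G)^2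
      ≤ (2^(2*k^2) * ∏ m ∈ range (k+1), (m.factorial : ℝ))^2 :=
    calc ((((k:ℝ)+1) * ((k+1).factorial : ℝ)) * (k:ℝ)^G)^2
        = ((k:ℝ)^(k*(k+1)) * ((k:ℝ)+1)^4) * ((k.factorial:ℝ))^2 := by
          rw [e4, ← e1]; ring
      _ ≤ ((∏ j ∈ range k, (j.factorial:ℝ))^2 * 16^(k^2)) * ((k.factorial:ℝ))^2 :=
          mul_le_mul_of_nonneg_right (lemM k hk) (by positivity)
      _ = (2^(2*k^2) * ∏ m ∈ range (k+1), (m.factorial : ℝ))^2 := by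
          rw [e3, ← e2]; ring
  have h1 : (0:ℝ) ≤ (((k:ℝ)+1) * ((k+1).factorial : ℝ)) * (k:ℝ)^G := by positivity
  have h2 : (0:ℝ) ≤ 2^(2*k^2) * ∏ m ∈ range (k+1), (m.factorial : ℝ) := by positivity
  exact (pow_le_pow_iff_left₀ h1 h2 (by norm_num)).mp hsq

open Finset in
lemma inner_prod (k : ℕ) (i : Fin (k+1)) :
    ∏ j ∈ Finset.Ioi i, ((((j:ℕ):ℝ)) - (((i:ℕ):ℝ)))
      = (((k - (i:ℕ)).factorial : ℝ)) := by
  have h1 : ∏ j ∈ Finset.Ioi i, ((((j:ℕ):ℝ)) - (((i:ℕ):ℝ)))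
      = ∏ x ∈ Finset.Ioc (i:ℕ) k, ((x:ℝ) - (((i:ℕ):ℝ))) := by
    have hmap := Fin.map_valEmbedding_Ioi (a := i)
    rw [show Finset.Ioo (i:ℕ) (k+1) = Finset.Ioc (i:ℕ) k by ext x; simp only [Finset.mem_Ioo, Finset.mem_Ioc]; omega] at hmap
    rw [← hmap, Finset.prod_map]
    rfl
  have h2 : Finset.Ioc (i:ℕ) k = Finset.Ico ((i:ℕ)+1) (k+1) := by
    ext x; simp only [Finset.mem_Ioc, Finset.mem_Ico]; omega
  rw [h1, h2, Finset.prod_Ico_eq_prod_range]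
  have h3 : ∀ t ∈ range (k+1-((i:ℕ)+1)), ((((i:ℕ)+1+t:ℕ)):ℝ) - ((i:ℕ):ℝ) = (t:ℝ)+1 := by
    intro t _; push_cast; ring
  rw [Finset.prod_congr rfl h3]
  have h4 : k+1-((i:ℕ)+1) = k - (i:ℕ) := by omega
  rw [h4]
  rw [show (((k - (i:ℕ)).factorial : ℝ)) = ((∏ t ∈ range (k-(i:ℕ)), (t+1) : ℕ) : ℝ) by
    rw [Finset.prod_range_add_one_eq_factorial]]
  push_cast
  rfl

open Finset in
lemma det_eq (k : ℕ) (hk : 1 ≤ k) :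
    (Matrix.vandermonde (fun i : Fin (k+1) => ((i:ℕ):ℝ)/(k:ℝ))).det
      = ∏ m ∈ Finset.range (k+1), ((m.factorial : ℝ) / (k:ℝ)^m) := by
  have hkpos : (0:ℝ) < k := by exact_mod_cast hk
  rw [Matrix.det_vandermonde]
  have hinner : ∀ i : Fin (k+1),
      ∏ j ∈ Finset.Ioi i, (((j:ℕ):ℝ)/(k:ℝ) - ((i:ℕ):ℝ)/(k:ℝ))
        = ((k - (i:ℕ)).factorial : ℝ) / (k:ℝ)^(k-(i:ℕ)) := by
    intro i
    have e : ∀ j : Fin (k+1), ((j:ℕ):ℝ)/(k:ℝ) - ((i:ℕ):ℝ)/(k:ℝ)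
        = (((j:ℕ):ℝ) - ((i:ℕ):ℝ)) * ((k:ℝ))⁻¹ := by
      intro j; field_simp
    rw [Finset.prod_congr rfl (fun j _ => e j), Finset.prod_mul_distrib,
      Finset.prod_const, inner_prod k i, Fin.card_Ioi]
    rw [show (k+1-1-(i:ℕ)) = k - (i:ℕ) from rfl]
    rw [div_eq_mul_inv, inv_pow]
  rw [Finset.prod_congr rfl (fun i _ => hinner i)]
  rw [Fin.prod_univ_eq_prod_range (fun m => ((k - m).factorial : ℝ) / (k:ℝ)^(k-m)) (k+1)]
  rw [← Finset.prod_range_reflect (fun m => ((m).factorial : ℝ) / (k:ℝ)^m) (k+1)]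
  apply Finset.prod_congr rfl
  intro j hj
  simp only [Nat.add_sub_cancel]


/-- lower bound on the smallest singular value of the Vandermonde matrix
at the nodes `0, 1/k, …, 1`. -/
theorem stmt8 (k : ℕ) (hk : 1 ≤ k) (a : Fin (k + 1) → ℝ) :
    Real.sqrt (∑ i, (Matrix.mulVec
        (Matrix.of fun i j : Fin (k + 1) => ((i : ℕ) / (k : ℝ)) ^ (j : ℕ)) a i) ^ 2)
      ≥ ((2 : ℝ) ^ (2 * k ^ 2))⁻¹ * Real.sqrt (∑ i, (a i) ^ 2) := by
  have hkR : (1:ℝ) ≤ (k:ℝ) := by exact_mod_cast hk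
  set v : Fin (k+1) → ℝ := fun i => ((i:ℕ):ℝ)/(k:ℝ) with hv
  set M : Matrix (Fin (k+1)) (Fin (k+1)) ℝ := Matrix.vandermonde v with hMdef
  have hM : (Matrix.of fun i j : Fin (k + 1) => ((i : ℕ) / (k : ℝ)) ^ (j : ℕ)) = M := rfl
  rw [hM]
  set x : Fin (k+1) → ℝ := M.mulVec a with hx
  have hdet : M.det = ∏ m ∈ Finset.range (k+1), ((m.factorial : ℝ) / (k:ℝ)^m) := det_eq k hk
  have hdetpos : 0 < M.det := by
    rw [hdet]
    apply Finset.prod_pos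
    intro m _
    have : (0:ℝ) < (k:ℝ) := by linarith
    positivity
  have hunit : IsUnit M.det := isUnit_iff_ne_zero.mpr hdetpos.ne'
  set N : Matrix (Fin (k+1)) (Fin (k+1)) ℝ := M⁻¹ with hN
  have ha : a = N.mulVec x := by
    rw [hx, Matrix.mulVec_mulVec, Matrix.nonsing_inv_mul M hunit, Matrix.one_mulVec]
  set B : ℝ := ((k+1).factorial : ℝ) / M.det with hB
  have hBpos : 0 < B := by positivity
  -- entries of M are in [0,1]
  have hMentry : ∀ i j : Fin (k+1), |M i j| ≤ 1 := by
    intro i j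
    have h1 : M i j = (v i) ^ (j:ℕ) := rfl
    have h2 : 0 ≤ v i := by
      have : (0:ℝ) ≤ ((i:ℕ):ℝ) := Nat.cast_nonneg _
      rw [hv]; positivity
    have h3 : v i ≤ 1 := by
      rw [hv]
      have : ((i:ℕ):ℝ) ≤ (k:ℝ) := by exact_mod_cast Fin.is_le i
      rw [div_le_one (by linarith)]
      exact this
    rw [h1, abs_of_nonneg (pow_nonneg h2 _)]
    exact pow_le_one₀ h2 h3
  -- adjugate entry bound
  have hadj : ∀ i j : Fin (k+1), |M.adjugate i j| ≤ ((k+1).factorial : ℝ) := by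
    intro i j
    rw [Matrix.adjugate_apply]
    have hx1 : ∀ i' j' : Fin (k+1), |((M.updateRow j (Pi.single i 1)) i' j')| ≤ (1:ℝ) := by
      intro i' j'
      rw [Matrix.updateRow_apply]
      by_cases h : i' = j
      · simp only [if_pos h, Pi.single_apply]
        split_ifs <;> norm_num
      · simp only [if_neg h]
        exact hMentry i' j'
    have := Matrix.det_le (A := M.updateRow j (Pi.single i 1))
      (abv := (AbsoluteValue.abs : AbsoluteValue ℝ ℝ)) (x := 1) (fun i' j' => hx1 i' j')
    simpa [Fintype.card_fin, nsmul_eq_mul] using this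
  have hNentry : ∀ i j : Fin (k+1), |N i j| ≤ B := by
    intro i j
    have h1 : N i j = (M.det)⁻¹ * M.adjugate i j := by
      rw [hN, Matrix.inv_def, Ring.inverse_eq_inv', Matrix.smul_apply, smul_eq_mul]
    rw [h1, abs_mul, abs_of_nonneg (inv_nonneg.mpr hdetpos.le), hB, div_eq_mul_inv,
      mul_comm (((k+1).factorial : ℝ))]
    exact mul_le_mul_of_nonneg_left (hadj i j) (inv_nonneg.mpr hdetpos.le)
  set X : ℝ := ∑ i, (x i)^2 with hX
  have hXnn : 0 ≤ X := Finset.sum_nonneg fun i _ => sq_nonneg _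
  -- Cauchy-Schwarz bound
  have hA : ∑ i, (a i)^2 ≤ ((k+1:ℝ) * B)^2 * X := by
    have hrow : ∀ i : Fin (k+1), (a i)^2 ≤ ((k+1:ℝ) * B^2) * X := by
      intro i
      have h1 : a i = ∑ j, N i j * x j := by
        rw [ha]; rfl
      have hCS := Finset.sum_mul_sq_le_sq_mul_sq Finset.univ (fun j => N i j) x
      have h2 : ∑ j, (N i j)^2 ≤ (k+1:ℝ) * B^2 := by
        calc ∑ j, (N i j)^2 ≤ ∑ _j : Fin (k+1), B^2 := by
              apply Finset.sum_le_sum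
              intro j _
              rw [← sq_abs]
              exact pow_le_pow_left₀ (abs_nonneg _) (hNentry i j) 2
          _ = (k+1:ℝ) * B^2 := by
              rw [Finset.sum_const, Finset.card_univ, Fintype.card_fin, nsmul_eq_mul]
              push_cast; ring
      calc (a i)^2 = (∑ j, N i j * x j)^2 := by rw [h1]
        _ ≤ (∑ j, (N i j)^2) * X := hCS
        _ ≤ ((k+1:ℝ) * B^2) * X := mul_le_mul_of_nonneg_right h2 hXnn
    calc ∑ i, (a i)^2 ≤ ∑ _i : Fin (k+1), ((k+1:ℝ) * B^2) * X :=
          Finset.sum_le_sum fun i _ => hrow i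
      _ = ((k+1:ℝ) * B)^2 * X := by
          rw [Finset.sum_const, Finset.card_univ, Fintype.card_fin, nsmul_eq_mul]
          push_cast; ring
  -- key numeric bound : (k+1) * B ≤ 2^(2k²)
  have hkey : ((k:ℝ)+1) * B ≤ 2^(2*k^2) := by
    rw [hB, ← mul_div_assoc, div_le_iff₀ hdetpos]
    calc ((k:ℝ)+1) * ((k+1).factorial : ℝ) ≤ 2^(2*k^2) * ∏ m ∈ Finset.range (k+1), ((m.factorial : ℝ) / (k:ℝ)^m) := key k hk
      _ = 2^(2*k^2) * M.det := by rw [hdet]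
  set ε : ℝ := ((2:ℝ)^(2*k^2))⁻¹ with hε
  have hεpos : 0 < ε := by positivity
  have hεB : ε * (((k:ℝ)+1) * B) ≤ 1 := by
    rw [hε]
    rw [inv_mul_le_iff₀ (by positivity), mul_one]
    exact hkey
  have hfinal : ε^2 * ∑ i, (a i)^2 ≤ X := by
    have h1 : ε^2 * ∑ i, (a i)^2 ≤ ε^2 * (((k+1:ℝ) * B)^2 * X) :=
      mul_le_mul_of_nonneg_left hA (by positivity)
    have h2 : ε^2 * (((k+1:ℝ) * B)^2 * X) = (ε * (((k:ℝ)+1) * B))^2 * X := by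
      push_cast; ring
    have h3 : (ε * (((k:ℝ)+1) * B))^2 ≤ 1 := by
      have hnn : 0 ≤ ε * (((k:ℝ)+1) * B) := by positivity
      nlinarith
    nlinarith [mul_le_mul_of_nonneg_right h3 hXnn]
  rw [ge_iff_le]
  have h4 : ε * Real.sqrt (∑ i, (a i)^2) = Real.sqrt (ε^2 * ∑ i, (a i)^2) := by
    rw [Real.sqrt_mul (sq_nonneg ε), Real.sqrt_sq hεpos.le]
  rw [h4]
  exact Real.sqrt_le_sqrt hfinal

end GraphDisc
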